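/- Let a, b, c, x be points of ℝ³ such that the four points x, a, b, c are affinely independent, and define F : ℝ³ → ℝ³ by F(p) = (dist p a, dist p b, dist p c). Then F is differentiable at x and the Fréchet derivative fderiv ℝ F x : ℝ³ → ℝ³ is a linear bijection. -/

import Mathlib

open scoped RealInnerProductSpace

lemma hasFDerivAt_dist_const {E : Type*} [NormedAddCommGroup E] [InnerProductSpace ℝ E]
    (a x : E) (hne : x ≠ a) :
    HasFDerivAt (fun p => dist p a) ((‖x - a‖⁻¹) • innerSL ℝ (x - a)) x := by
  have hsub : HasFDerivAt (fun p : E => p - a) (ContinuousLinearMap.id ℝ E) x :=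
    (hasFDerivAt_id x).sub_const a
  have h1 : HasFDerivAt (fun p : E => ‖p - a‖ ^ 2)
      (2 • (innerSL ℝ (x - a)).comp (ContinuousLinearMap.id ℝ E)) x := hsub.norm_sq
  have hx0 : ‖x - a‖ ≠ 0 := norm_ne_zero_iff.2 (sub_ne_zero.2 hne)
  have hsq : (‖x - a‖ ^ 2 : ℝ) ≠ 0 := by positivity
  have h2 := (Real.hasDerivAt_sqrt hsq).comp_hasFDerivAt x h1
  have heq : (fun p : E => Real.sqrt (‖p - a‖ ^ 2)) = fun p => dist p a := by
    funext p
    rw [Real.sqrt_sq (norm_nonneg _), dist_eq_norm]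
  simp only [Function.comp_def] at h2
  rw [heq] at h2
  convert h2 using 1
  · rfl
  · rfl
  ext v
  have : Real.sqrt (‖x - a‖ ^ 2) = ‖x - a‖ := Real.sqrt_sq (norm_nonneg _)
  simp only [ContinuousLinearMap.smul_apply, ContinuousLinearMap.coe_smul',
    Pi.smul_apply, innerSL_apply_apply, this, smul_eq_mul, ContinuousLinearMap.coe_comp',
    Function.comp_apply, ContinuousLinearMap.coe_id', id_eq,
    ContinuousLinearMap.smul_apply]
  rw [two_smul]
  field_simp
  ring

/-- For a point `x` forming an affinely independent quadruple with `a, b, c`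
in Euclidean 3-space, the map `p ↦ (dist p a, dist p b, dist p c)` is
differentiable at `x` and its Fréchet derivative there is a linear bijection. -/
theorem distances_to_three_points_fderiv_bijective
    (a b c x : EuclideanSpace ℝ (Fin 3))
    (h : AffineIndependent ℝ ![x, a, b, c]) :
    DifferentiableAt ℝ
      (fun p : EuclideanSpace ℝ (Fin 3) => ((dist p a, dist p b, dist p c) : ℝ × ℝ × ℝ)) x ∧
    Function.Bijective
      (fderiv ℝ
        (fun p : EuclideanSpace ℝ (Fin 3) => ((dist p a, dist p b, dist p c) : ℝ × ℝ × ℝ)) x) := by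
  have hinj := h.injective
  have hxa : x ≠ a := fun he => by
    have : (0 : Fin 4) = 1 := hinj (by simpa using he)
    simp at this
  have hxb : x ≠ b := fun he => by
    have : (0 : Fin 4) = 2 := hinj (by simpa using he)
    simp at this
  have hxc : x ≠ c := fun he => by
    have : (0 : Fin 4) = 3 := hinj (by simpa using he)
    simp at this
  set La := (‖x - a‖⁻¹) • innerSL ℝ (x - a) with hLa
  set Lb := (‖x - b‖⁻¹) • innerSL ℝ (x - b) with hLb
  set Lc := (‖x - c‖⁻¹) • innerSL ℝ (x - c) with hLc
  have hFa := hasFDerivAt_dist_const a x hxa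
  have hFb := hasFDerivAt_dist_const b x hxb
  have hFc := hasFDerivAt_dist_const c x hxc
  have hF : HasFDerivAt
      (fun p : EuclideanSpace ℝ (Fin 3) => ((dist p a, dist p b, dist p c) : ℝ × ℝ × ℝ))
      (La.prod (Lb.prod Lc)) x := hFa.prodMk (hFb.prodMk hFc)
  refine ⟨hF.differentiableAt, ?_⟩
  rw [hF.fderiv]
  -- linear independence of x - a, x - b, x - c
  have li0 := (affineIndependent_iff_linearIndependent_vsub ℝ ![x, a, b, c] 0).mp h
  have einj : Function.Injective
      (fun i : Fin 3 => (⟨i.succ, Fin.succ_ne_zero i⟩ : {i : Fin 4 // i ≠ 0})) := by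
    intro i j hij
    exact Fin.succ_injective _ (congrArg Subtype.val hij)
  have li1 := li0.comp _ einj
  set w : Fin 3 → EuclideanSpace ℝ (Fin 3) := ![a - x, b - x, c - x] with hw
  have hwli : LinearIndependent ℝ w := by
    convert li1 using 1
    funext i
    fin_cases i <;> simp [hw, vsub_eq_sub]
    rfl
  have hspan : Submodule.span ℝ (Set.range w) = ⊤ :=
    hwli.span_eq_top_of_card_eq_finrank (by simp [finrank_euclideanSpace_fin])
  -- injectivity
  have hinj2 : Function.Injective (La.prod (Lb.prod Lc)) := by
    rw [← ContinuousLinearMap.coe_coe, ← LinearMap.ker_eq_bot,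
      LinearMap.ker_eq_bot']
    intro v hv
    have hv' : La v = 0 ∧ Lb v = 0 ∧ Lc v = 0 := by
      have := congrArg Prod.fst hv
      have h2 := congrArg (fun p : ℝ × ℝ × ℝ => p.2.1) hv
      have h3 := congrArg (fun p : ℝ × ℝ × ℝ => p.2.2) hv
      exact ⟨this, h2, h3⟩
    have key : ∀ i, inner ℝ (w i) v = (0 : ℝ) := by
      intro i
      have hgen : ∀ (y : EuclideanSpace ℝ (Fin 3)), x ≠ y →
          (((‖x - y‖⁻¹) • innerSL ℝ (x - y) : EuclideanSpace ℝ (Fin 3) →L[ℝ] ℝ) v = 0) →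
          inner ℝ (y - x) v = (0 : ℝ) := by
        intro y hy hz
        simp only [ContinuousLinearMap.smul_apply, innerSL_apply_apply, smul_eq_mul] at hz
        have hne : (‖x - y‖⁻¹ : ℝ) ≠ 0 :=
          inv_ne_zero (norm_ne_zero_iff.2 (sub_ne_zero.2 hy))
        have : inner ℝ (x - y) v = (0 : ℝ) := by
          rcases mul_eq_zero.mp hz with h | h
          · exact absurd h hne
          · exact h
        rw [(neg_sub x y).symm, inner_neg_left, this, neg_zero]
      fin_cases i
      · exact hgen a hxa hv'.1
      · exact hgen b hxb hv'.2.1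
      · exact hgen c hxc hv'.2.2
    have hall : ∀ u ∈ Submodule.span ℝ (Set.range w), inner ℝ u v = (0 : ℝ) := by
      intro u hu
      induction hu using Submodule.span_induction with
      | mem u hu => obtain ⟨i, rfl⟩ := hu; exact key i
      | zero => simp
      | add u₁ u₂ _ _ h₁ h₂ => rw [inner_add_left, h₁, h₂, add_zero]
      | smul r u _ hu => rw [real_inner_smul_left, hu, mul_zero]
    have : inner ℝ v v = (0 : ℝ) := hall v (hspan ▸ Submodule.mem_top)
    exact inner_self_eq_zero.mp this
  refine ⟨hinj2, ?_⟩
  have hfr : Module.finrank ℝ (EuclideanSpace ℝ (Fin 3)) = Module.finrank ℝ (ℝ × ℝ × ℝ) := by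
    simp [finrank_euclideanSpace_fin]
  exact (LinearMap.injective_iff_surjective_of_finrank_eq_finrank hfr).mp hinj2
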